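/- Let K be a complex s×s matrix and μ Hermitian with μ ≥ ±(1/2)(I − K K*). Set K₂ = sqrt(μ + (1/2)(K K* + I)) and K₁ = K₂⁻ K (generalized inverse). Then K₁* K₁ ≤ I. -/

import Mathlib

open Matrix
open scoped ComplexOrder

/-- The positive semidefinite square root of a positive semidefinite matrix
(the definition `Matrix.PosSemidef.sqrt` of the older Mathlib, since removed). -/
noncomputable def Matrix.PosSemidef.sqrt {n 𝕜 : Type*} [Fintype n] [DecidableEq n] [RCLike 𝕜]
    {A : Matrix n n 𝕜} (hA : A.PosSemidef) : Matrix n n 𝕜 :=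
  hA.1.eigenvectorUnitary.1 * diagonal ((↑) ∘ Real.sqrt ∘ hA.1.eigenvalues) *
  (star hA.1.eigenvectorUnitary : Matrix n n 𝕜)

lemma Matrix.PosSemidef.posSemidef_sqrt' {n 𝕜 : Type*} [Fintype n] [DecidableEq n] [RCLike 𝕜]
    {A : Matrix n n 𝕜} (hA : A.PosSemidef) : hA.sqrt.PosSemidef := by
  unfold Matrix.PosSemidef.sqrt
  have hD : (diagonal ((↑) ∘ Real.sqrt ∘ hA.1.eigenvalues : n → 𝕜)).PosSemidef :=
    posSemidef_diagonal_iff.mpr fun i => by simp [Real.sqrt_nonneg]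
  simpa [Matrix.star_eq_conjTranspose] using hD.mul_mul_conjTranspose_same hA.1.eigenvectorUnitary.1

lemma Matrix.PosSemidef.sqrt_mul_self' {n 𝕜 : Type*} [Fintype n] [DecidableEq n] [RCLike 𝕜]
    {A : Matrix n n 𝕜} (hA : A.PosSemidef) : hA.sqrt * hA.sqrt = A := by
  unfold Matrix.PosSemidef.sqrt
  set U := hA.1.eigenvectorUnitary
  have hU : (star U : Matrix n n 𝕜) * U.1 = 1 := Unitary.coe_star_mul_self U
  have hDD : diagonal ((↑) ∘ Real.sqrt ∘ hA.1.eigenvalues : n → 𝕜) *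
      diagonal ((↑) ∘ Real.sqrt ∘ hA.1.eigenvalues) = diagonal (RCLike.ofReal ∘ hA.1.eigenvalues) := by
    rw [diagonal_mul_diagonal]; congr 1; funext i
    simp only [Function.comp_apply, ← RCLike.ofReal_mul]
    rw [Real.mul_self_sqrt (hA.eigenvalues_nonneg i)]
  conv_rhs => rw [hA.1.spectral_theorem]
  rw [Unitary.conjStarAlgAut_apply]
  calc _ = U.1 * diagonal ((↑) ∘ Real.sqrt ∘ hA.1.eigenvalues) * ((star U : Matrix n n 𝕜) * U.1) *
        diagonal ((↑) ∘ Real.sqrt ∘ hA.1.eigenvalues) * (star U : Matrix n n 𝕜) := by simp only [mul_assoc]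
    _ = _ := by rw [hU, mul_one, mul_assoc U.1 (diagonal _) (diagonal _), hDD]

/-- If `1 - A Aᴴ` is PSD then so is `1 - Aᴴ A`. -/
lemma aux_contraction {n : Type*} [Fintype n] [DecidableEq n]
    (A : Matrix n n ℂ) (h : (1 - A * Aᴴ).PosSemidef) :
    (1 - Aᴴ * A).PosSemidef := by
  classical
  set e : (n → ℂ) → EuclideanSpace ℂ n := fun v => (WithLp.equiv 2 (n → ℂ)).symm v with he
  have hdot : ∀ u v : n → ℂ, star u ⬝ᵥ v = (inner ℂ (e u) (e v) : ℂ) := fun u v => by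
    rw [dotProduct_comm]; rfl
  have hself : ∀ v : n → ℂ, star v ⬝ᵥ v = ((‖e v‖ : ℂ)) ^ 2 := fun v => by
    rw [hdot, inner_self_eq_norm_sq_to_K]; norm_cast
  -- the hypothesis as a norm bound on `Aᴴ *ᵥ ·`
  have hb : ∀ y : n → ℂ, ‖e (Aᴴ *ᵥ y)‖ ≤ ‖e y‖ := by
    intro y
    have h0 := h.dotProduct_mulVec_nonneg y
    rw [sub_mulVec, dotProduct_sub, one_mulVec, sub_nonneg, ← mulVec_mulVec,
      dotProduct_mulVec,
      show star y ᵥ* A = star (Aᴴ *ᵥ y) by rw [star_mulVec, conjTranspose_conjTranspose],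
      hself, hself] at h0
    rw [← Complex.ofReal_pow, ← Complex.ofReal_pow, Complex.real_le_real] at h0
    nlinarith [norm_nonneg (e (Aᴴ *ᵥ y)), norm_nonneg (e y)]
  -- deduce the norm bound on `A *ᵥ ·`
  have hb' : ∀ x : n → ℂ, ‖e (A *ᵥ x)‖ ≤ ‖e x‖ := by
    intro x
    set a : ℝ := ‖e (A *ᵥ x)‖ with ha
    have key : ((a : ℂ)) ^ 2 = (inner ℂ (e x) (e (Aᴴ *ᵥ (A *ᵥ x))) : ℂ) := by
      rw [← hdot, dotProduct_mulVec,
        show star x ᵥ* Aᴴ = star (A *ᵥ x) from (star_mulVec A x).symm, hself]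
    have habs : a ^ 2 ≤ ‖e x‖ * a := by
      have h1 : a ^ 2 = ‖(inner ℂ (e x) (e (Aᴴ *ᵥ (A *ᵥ x))) : ℂ)‖ := by
        have ha0 : (0:ℝ) ≤ a := by rw [ha]; exact norm_nonneg _
        rw [← key, norm_pow, Complex.norm_real, Real.norm_of_nonneg ha0]
      have h2 := norm_inner_le_norm (𝕜 := ℂ) (e x) (e (Aᴴ *ᵥ (A *ᵥ x)))
      have h3 := hb (A *ᵥ x)
      calc a ^ 2 = ‖(inner ℂ (e x) (e (Aᴴ *ᵥ (A *ᵥ x))) : ℂ)‖ := h1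
        _ ≤ ‖e x‖ * ‖e (Aᴴ *ᵥ (A *ᵥ x))‖ := h2
        _ ≤ ‖e x‖ * a := by
            exact mul_le_mul_of_nonneg_left h3 (norm_nonneg _)
    have ha0 : (0:ℝ) ≤ a := by rw [ha]; exact norm_nonneg _
    rcases eq_or_lt_of_le ha0 with h0 | h0
    · rw [← h0]; exact norm_nonneg _
    · nlinarith
  refine .of_dotProduct_mulVec_nonneg ?_ ?_
  · have : (1 - Aᴴ * A)ᴴ = 1 - Aᴴ * A := by
      simp [conjTranspose_sub, conjTranspose_mul]
    exact this
  · intro x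
    rw [sub_mulVec, dotProduct_sub, one_mulVec, ← mulVec_mulVec,
      dotProduct_mulVec,
      show star x ᵥ* Aᴴ = star (A *ᵥ x) from (star_mulVec A x).symm, hself, hself]
    rw [← Complex.ofReal_pow, ← Complex.ofReal_pow, ← Complex.ofReal_sub,
      Complex.zero_le_real, sub_nonneg]
    have := hb' x
    nlinarith [norm_nonneg (e (A *ᵥ x)), norm_nonneg (e x)]

theorem attenuator_contraction
    {s : ℕ} (K μ : Matrix (Fin s) (Fin s) ℂ) (hμ : μ.IsHermitian)
    (h₁ : (μ - (1/2 : ℂ) • (1 - K * Kᴴ)).PosSemidef)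
    (h₂ : (μ + (1/2 : ℂ) • (1 - K * Kᴴ)).PosSemidef)
    (hpos : (μ + (1/2 : ℂ) • (K * Kᴴ + 1)).PosSemidef)
    (K₁ : Matrix (Fin s) (Fin s) ℂ) (hK₁ : K₁ = hpos.sqrt⁻¹ * K) :
    (1 - K₁ᴴ * K₁).PosSemidef := by
  set M : Matrix (Fin s) (Fin s) ℂ := μ + (1/2 : ℂ) • (K * Kᴴ + 1) with hMdef
  -- M is positive definite
  have hM : M.PosDef := by
    have hid : M = (μ - (1/2 : ℂ) • (1 - K * Kᴴ)) + 1 := by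
      rw [hMdef]; module
    rw [hid]
    exact Matrix.PosDef.posSemidef_add h₁ Matrix.PosDef.one
  set S : Matrix (Fin s) (Fin s) ℂ := hpos.sqrt with hSdef
  have hS : S.PosSemidef := hpos.posSemidef_sqrt'
  have hS2 : S * S = M := hpos.sqrt_mul_self'
  -- S is invertible
  have hdet : IsUnit S.det := by
    have hMdet : M.det ≠ 0 := hM.det_pos.ne'
    have : S.det * S.det = M.det := by rw [← det_mul, hS2]
    have hSdet : S.det ≠ 0 := by
      intro h0
      rw [h0, mul_zero] at this
      exact hMdet this.symm
    exact hSdet.isUnit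
  have hSH : Sᴴ = S := hS.1
  have hSinvH : S⁻¹ᴴ = S⁻¹ := by rw [conjTranspose_nonsing_inv, hSH]
  -- μ + ½(1 - KKᴴ) = M - KKᴴ
  have hid2 : μ + (1/2 : ℂ) • (1 - K * Kᴴ) = M - K * Kᴴ := by
    rw [hMdef]; module
  have h₂' : (M - K * Kᴴ).PosSemidef := hid2 ▸ h₂
  have hconj : (S⁻¹ * (M - K * Kᴴ) * S⁻¹ᴴ).PosSemidef :=
    h₂'.mul_mul_conjTranspose_same S⁻¹
  have hkey : S⁻¹ * (M - K * Kᴴ) * S⁻¹ᴴ = 1 - K₁ * K₁ᴴ := by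
    rw [hSinvH, hK₁]
    have h1 : S⁻¹ * M * S⁻¹ = 1 := by
      rw [← hS2, ← mul_assoc, mul_assoc (S⁻¹ * S), mul_nonsing_inv _ hdet,
        nonsing_inv_mul _ hdet, one_mul]
    calc S⁻¹ * (M - K * Kᴴ) * S⁻¹
        = S⁻¹ * M * S⁻¹ - S⁻¹ * (K * Kᴴ) * S⁻¹ := by noncomm_ring
      _ = 1 - (S⁻¹ * K) * (S⁻¹ * K)ᴴ := by
          rw [h1, conjTranspose_mul, conjTranspose_nonsing_inv, hSH]
          noncomm_ring
  rw [hkey] at hconj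
  exact aux_contraction K₁ hconj
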